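/- Let S = C + D_y with y > 0 entrywise and C symmetric with zero diagonal, and let J_GS = −(L + D_y)^{-1} Lᵀ where L is the strict lower triangle of C. If S is not positive semidefinite, then the spectral radius of J_GS is strictly greater than 1. -/

import Mathlib

open Matrix Finset Filter Topology

lemma gs_frob {n : ℕ} (M : Matrix (Fin n) (Fin n) ℝ) (x : Fin n → ℝ) :
    ∑ i, (M *ᵥ x) i ^ 2 ≤ (∑ i, ∑ j, M i j ^ 2) * ∑ j, x j ^ 2 := by
  rw [Finset.sum_mul]
  apply Finset.sum_le_sum
  intro i _
  simpa [Matrix.mulVec, dotProduct] using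
    Finset.sum_mul_sq_le_sq_mul_sq Finset.univ (M i) x

lemma gs_orth {n : ℕ} {U : Matrix (Fin n) (Fin n) ℝ} (hU : Uᵀ * U = 1)
    (a b : Fin n → ℝ) : (U *ᵥ a) ⬝ᵥ (U *ᵥ b) = a ⬝ᵥ b := by
  rw [Matrix.dotProduct_mulVec]
  have : (U *ᵥ a) ᵥ* U = a ᵥ* (Uᵀ * U) := by
    rw [← Matrix.vecMul_vecMul, Matrix.vecMul_transpose]
  rw [this, hU, Matrix.vecMul_one]

lemma gs_spec {n : ℕ} (S : Matrix (Fin n) (Fin n) ℝ) (hH : S.IsHermitian) :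
    ∃ c : ℝ, 0 < c ∧ ∀ x : Fin n → ℝ, -(x ⬝ᵥ S *ᵥ x) ≤ c * ∑ i, (S *ᵥ x) i ^ 2 := by
  classical
  set lam := hH.eigenvalues with hlam
  set U : Matrix (Fin n) (Fin n) ℝ :=
    (hH.eigenvectorUnitary : Matrix (Fin n) (Fin n) ℝ) with hUdef
  have hUorth' : U * Uᵀ = 1 := by
    have h2 := hH.eigenvectorUnitary.2
    rw [Matrix.mem_unitaryGroup_iff] at h2
    simpa [Matrix.star_eq_conjTranspose,
      Matrix.conjTranspose_eq_transpose_of_trivial] using h2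
  have hUorth : Uᵀ * U = 1 := mul_eq_one_comm.mp hUorth'
  have hspec : S = U * Matrix.diagonal lam * Uᵀ := by
    have := hH.spectral_theorem
    simpa [Matrix.star_eq_conjTranspose,
      Matrix.conjTranspose_eq_transpose_of_trivial] using this
  have hg : ∀ j : Fin n, 0 ≤ (if lam j < 0 then (-lam j)⁻¹ else 0) := by
    intro j
    split_ifs with h
    · exact inv_nonneg.2 (by linarith)
    · exact le_rfl
  have hsum : 0 ≤ ∑ j, (if lam j < 0 then (-lam j)⁻¹ else 0) :=
    Finset.sum_nonneg fun j _ => hg j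
  refine ⟨1 + ∑ i, (if lam i < 0 then (-lam i)⁻¹ else 0), by linarith, ?_⟩
  intro x
  set z := Uᵀ *ᵥ x with hz
  have hx : U *ᵥ z = x := by
    rw [hz, Matrix.mulVec_mulVec, hUorth', Matrix.one_mulVec]
  have hSx : S *ᵥ x = U *ᵥ (fun i => lam i * z i) := by
    have h1 : S *ᵥ x = U *ᵥ (Matrix.diagonal lam *ᵥ z) := by
      conv_rhs => rw [hz, Matrix.mulVec_mulVec, Matrix.mulVec_mulVec]
      rw [← hspec]
    have h2 : Matrix.diagonal lam *ᵥ z = fun i => lam i * z i := by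
      funext i
      rw [Matrix.mulVec_diagonal]
    rw [h1, h2]
  have hq : x ⬝ᵥ S *ᵥ x = ∑ i, lam i * z i ^ 2 := by
    calc x ⬝ᵥ S *ᵥ x = (U *ᵥ z) ⬝ᵥ (U *ᵥ fun i => lam i * z i) := by rw [hx, ← hSx]
    _ = z ⬝ᵥ fun i => lam i * z i := gs_orth hUorth _ _
    _ = ∑ i, lam i * z i ^ 2 := by
        simp only [dotProduct]
        exact Finset.sum_congr rfl fun i _ => by ring
  have hN : ∑ i, (S *ᵥ x) i ^ 2 = ∑ i, lam i ^ 2 * z i ^ 2 := by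
    calc ∑ i, (S *ᵥ x) i ^ 2 = (S *ᵥ x) ⬝ᵥ (S *ᵥ x) := by
          simp [dotProduct, sq]
    _ = (fun i => lam i * z i) ⬝ᵥ (fun i => lam i * z i) := by rw [hSx, gs_orth hUorth]
    _ = ∑ i, lam i ^ 2 * z i ^ 2 := by
        simp only [dotProduct]
        exact Finset.sum_congr rfl fun i _ => by ring
  rw [hq, hN, Finset.mul_sum, ← Finset.sum_neg_distrib]
  apply Finset.sum_le_sum
  intro i _
  have hci : (if lam i < 0 then (-lam i)⁻¹ else 0) ≤
      ∑ j, (if lam j < 0 then (-lam j)⁻¹ else 0) :=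
    Finset.single_le_sum (fun j _ => hg j) (Finset.mem_univ i)
  have ht : (0:ℝ) ≤ z i ^ 2 := sq_nonneg _
  by_cases hneg : lam i < 0
  · rw [if_pos hneg] at hci
    have hlp : 0 < -lam i := by linarith
    have h1 : 1 ≤ (1 + ∑ j, (if lam j < 0 then (-lam j)⁻¹ else 0)) * (-lam i) := by
      calc (1:ℝ) = (-lam i)⁻¹ * (-lam i) := (inv_mul_cancel₀ hlp.ne').symm
      _ ≤ _ := mul_le_mul_of_nonneg_right (by linarith) hlp.le
    calc -(lam i * z i ^ 2) = 1 * (-lam i * z i ^ 2) := by ring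
    _ ≤ ((1 + ∑ j, (if lam j < 0 then (-lam j)⁻¹ else 0)) * (-lam i)) *
          (-lam i * z i ^ 2) := by
        apply mul_le_mul_of_nonneg_right h1
        nlinarith
    _ = (1 + ∑ j, (if lam j < 0 then (-lam j)⁻¹ else 0)) * (lam i ^ 2 * z i ^ 2) := by
        ring
  · push_neg at hneg
    have h0 : -(lam i * z i ^ 2) ≤ 0 := by nlinarith
    have h1 : 0 ≤ (1 + ∑ j, (if lam j < 0 then (-lam j)⁻¹ else 0)) *
        (lam i ^ 2 * z i ^ 2) := by positivity
    linarith

lemma gs_symm_dot {n : ℕ} {S : Matrix (Fin n) (Fin n) ℝ} (hS : Sᵀ = S)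
    (u v : Fin n → ℝ) : u ⬝ᵥ S *ᵥ v = v ⬝ᵥ S *ᵥ u := by
  simp only [dotProduct, Matrix.mulVec, Finset.mul_sum]
  rw [Finset.sum_comm]
  refine Finset.sum_congr rfl fun i _ => Finset.sum_congr rfl fun j _ => ?_
  have hij : S j i = S i j := congrFun (congrFun hS i) j
  rw [hij]
  ring

lemma gs_skew_dot {n : ℕ} (L : Matrix (Fin n) (Fin n) ℝ) (e : Fin n → ℝ) :
    e ⬝ᵥ Lᵀ *ᵥ e = e ⬝ᵥ L *ᵥ e := by
  rw [Matrix.dotProduct_mulVec, Matrix.vecMul_transpose, dotProduct_comm]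

lemma gs_step {n : ℕ} (L D : Matrix (Fin n) (Fin n) ℝ) (hD : Dᵀ = D)
    (x e : Fin n → ℝ) (he : (L + D) *ᵥ e = (L + D + Lᵀ) *ᵥ x) :
    (x - e) ⬝ᵥ (L + D + Lᵀ) *ᵥ (x - e)
      = x ⬝ᵥ (L + D + Lᵀ) *ᵥ x - e ⬝ᵥ D *ᵥ e := by
  have hAsymm : (L + D + Lᵀ)ᵀ = L + D + Lᵀ := by
    simp only [Matrix.transpose_add, Matrix.transpose_transpose, hD]
    abel
  have h1 : x ⬝ᵥ (L + D + Lᵀ) *ᵥ e = e ⬝ᵥ (L + D + Lᵀ) *ᵥ x := gs_symm_dot hAsymm x e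
  have h2 : e ⬝ᵥ (L + D + Lᵀ) *ᵥ x = e ⬝ᵥ L *ᵥ e + e ⬝ᵥ D *ᵥ e := by
    rw [← he, Matrix.add_mulVec, dotProduct_add]
  have h3 : e ⬝ᵥ (L + D + Lᵀ) *ᵥ e = e ⬝ᵥ L *ᵥ e + e ⬝ᵥ D *ᵥ e + e ⬝ᵥ L *ᵥ e := by
    rw [Matrix.add_mulVec, Matrix.add_mulVec, dotProduct_add, dotProduct_add,
      gs_skew_dot]
  rw [Matrix.mulVec_sub, dotProduct_sub, sub_dotProduct, sub_dotProduct,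
    h1, h2, h3]
  ring

set_option maxHeartbeats 2000000 in
theorem gaussSeidel_spectral_radius_gt_one
    (n : ℕ) (C : Matrix (Fin n) (Fin n) ℝ) (hC : C.IsSymm)
    (hdiag : ∀ i, C i i = 0)
    (y : Fin n → ℝ) (hy : ∀ i, 0 < y i)
    (L : Matrix (Fin n) (Fin n) ℝ)
    (hL : ∀ i j, L i j = if j < i then C i j else 0)
    (S : Matrix (Fin n) (Fin n) ℝ) (hS : S = C + Matrix.diagonal y)
    (hnpsd : ¬ S.PosSemidef) :
    ∃ μ : ℂ, ∃ w : Fin n → ℂ, w ≠ 0 ∧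
      ((-((L + Matrix.diagonal y)⁻¹ * L.transpose)).map
        (algebraMap ℝ ℂ)).mulVec w = μ • w ∧ 1 < ‖μ‖ := by
  classical
  -- Basic structure facts
  have hCL : C = L + Lᵀ := by
    funext i j
    simp only [Matrix.add_apply, Matrix.transpose_apply, hL]
    rcases lt_trichotomy i j with h | h | h
    · rw [if_neg (asymm h), if_pos h, hC.apply i j]
      ring
    · subst h
      simp [hdiag i, lt_irrefl]
    · rw [if_pos h, if_neg (asymm h)]
      ring
  have hSsum : S = L + Matrix.diagonal y + Lᵀ := by
    rw [hS, hCL]; abel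
  have hSsymm : Sᵀ = S := by
    rw [hSsum]
    simp only [Matrix.transpose_add, Matrix.transpose_transpose, Matrix.diagonal_transpose]
    abel
  have hherm : S.IsHermitian := by
    rw [Matrix.IsHermitian, Matrix.conjTranspose_eq_transpose_of_trivial, hSsymm]
  -- a vector with negative energy
  obtain ⟨x₀, hx₀⟩ : ∃ x : Fin n → ℝ, x ⬝ᵥ S *ᵥ x < 0 := by
    by_contra h
    push_neg at h
    exact hnpsd (Matrix.PosSemidef.of_dotProduct_mulVec_nonneg hherm fun x => by simpa [star_trivial] using h x)
  have hnemp : Nonempty (Fin n) := by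
    rcases isEmpty_or_nonempty (Fin n) with he | hne
    · exfalso
      rw [show x₀ ⬝ᵥ S *ᵥ x₀ = 0 from by simp [dotProduct]] at hx₀
      exact lt_irrefl 0 hx₀
    · exact hne
  -- the iteration matrix
  set M : Matrix (Fin n) (Fin n) ℝ := L + Matrix.diagonal y with hMdef
  have hMlow : M.BlockTriangular OrderDual.toDual := by
    intro i j hij
    have hij' : i < j := hij
    simp only [hMdef, Matrix.add_apply, hL, if_neg (asymm hij'),
      Matrix.diagonal_apply_ne _ (ne_of_lt hij')]
    ring
  have hdetM : M.det = ∏ i, y i := by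
    rw [Matrix.det_of_lowerTriangular M hMlow]
    refine Finset.prod_congr rfl fun i _ => ?_
    simp [hMdef, hL]
  have hdetMne : IsUnit M.det := by
    rw [hdetM]
    exact (Finset.prod_pos (fun i _ => hy i)).ne'.isUnit
  have hMinv : M⁻¹ * M = 1 := Matrix.nonsing_inv_mul M hdetMne
  have hMMinv : M * M⁻¹ = 1 := Matrix.mul_nonsing_inv M hdetMne
  set J : Matrix (Fin n) (Fin n) ℝ := -(M⁻¹ * Lᵀ) with hJdef
  have hJ1 : J = 1 - M⁻¹ * S := by
    rw [hJdef, hSsum, Matrix.mul_add, hMinv]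
    abel
  -- constants
  obtain ⟨c, hc, hcineq⟩ := gs_spec S hherm
  set FM : ℝ := (∑ i, ∑ j, M i j ^ 2) + 1 with hFM
  have hFMpos : 0 < FM := by
    have : (0:ℝ) ≤ ∑ i, ∑ j, M i j ^ 2 :=
      Finset.sum_nonneg fun i _ => Finset.sum_nonneg fun j _ => sq_nonneg _
    rw [hFM]; linarith
  set FS : ℝ := (∑ i, ∑ j, S i j ^ 2) + 1 with hFS
  have hFSpos : 0 < FS := by
    have : (0:ℝ) ≤ ∑ i, ∑ j, S i j ^ 2 :=
      Finset.sum_nonneg fun i _ => Finset.sum_nonneg fun j _ => sq_nonneg _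
    rw [hFS]; linarith
  have hFSsum : ∑ i, ∑ j, S i j ^ 2 ≤ FS := by rw [hFS]; linarith
  have hFMsum : ∑ i, ∑ j, M i j ^ 2 ≤ FM := by rw [hFM]; linarith
  set ylb : ℝ := Finset.univ.inf' Finset.univ_nonempty y with hylb
  have hylbpos : 0 < ylb := (Finset.lt_inf'_iff _).mpr fun i _ => hy i
  have hylble : ∀ i, ylb ≤ y i := fun i => Finset.inf'_le y (Finset.mem_univ i)
  set δ : ℝ := ylb / (FM * c) with hδ
  have hδpos : 0 < δ := by rw [hδ]; positivity
  -- one-step geometric decrease of the energy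
  have hstep : ∀ x : Fin n → ℝ, x ⬝ᵥ S *ᵥ x ≤ 0 →
      (J *ᵥ x) ⬝ᵥ S *ᵥ (J *ᵥ x) ≤ (1 + δ) * (x ⬝ᵥ S *ᵥ x) := by
    intro x hqx
    set e : Fin n → ℝ := (M⁻¹ * S) *ᵥ x with he
    have hMe : M *ᵥ e = S *ᵥ x := by
      rw [he, Matrix.mulVec_mulVec, ← Matrix.mul_assoc, hMMinv, Matrix.one_mul]
    have hJx : J *ᵥ x = x - e := by
      rw [hJ1, Matrix.sub_mulVec, Matrix.one_mulVec, ← he]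
    have hgs := gs_step L (Matrix.diagonal y) (Matrix.diagonal_transpose y) x e
      (by rw [← hMdef, hMe, hSsum])
    have hSLD : L + Matrix.diagonal y + Lᵀ = S := by rw [hSsum, hMdef]
    rw [hSLD] at hgs
    rw [hJx, hgs]
    have hdec1 : e ⬝ᵥ Matrix.diagonal y *ᵥ e = ∑ i, y i * e i ^ 2 := by
      simp only [dotProduct, Matrix.mulVec_diagonal]
      exact Finset.sum_congr rfl fun i _ => by ring
    have hdec2 : ylb * ∑ i, e i ^ 2 ≤ ∑ i, y i * e i ^ 2 := by
      rw [Finset.mul_sum]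
      exact Finset.sum_le_sum fun i _ => mul_le_mul_of_nonneg_right (hylble i) (sq_nonneg _)
    have hfrob : ∑ i, (S *ᵥ x) i ^ 2 ≤ FM * ∑ i, e i ^ 2 := by
      rw [← hMe]
      calc ∑ i, (M *ᵥ e) i ^ 2 ≤ (∑ i, ∑ j, M i j ^ 2) * ∑ j, e j ^ 2 := gs_frob M e
      _ ≤ FM * ∑ j, e j ^ 2 :=
          mul_le_mul_of_nonneg_right hFMsum (Finset.sum_nonneg fun j _ => sq_nonneg _)
    have hspec2 : -(x ⬝ᵥ S *ᵥ x) ≤ c * (FM * ∑ i, e i ^ 2) :=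
      le_trans (hcineq x) (mul_le_mul_of_nonneg_left hfrob hc.le)
    have hδmul : δ * (c * FM) = ylb := by
      rw [hδ]
      field_simp
    have hkey : δ * (-(x ⬝ᵥ S *ᵥ x)) ≤ ylb * ∑ i, e i ^ 2 := by
      calc δ * (-(x ⬝ᵥ S *ᵥ x)) ≤ δ * (c * (FM * ∑ i, e i ^ 2)) :=
            mul_le_mul_of_nonneg_left hspec2 hδpos.le
      _ = (δ * (c * FM)) * ∑ i, e i ^ 2 := by ring
      _ = ylb * ∑ i, e i ^ 2 := by rw [hδmul]
    linarith
  -- iterate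
  have hiter : ∀ r : ℕ, ((J ^ r) *ᵥ x₀) ⬝ᵥ S *ᵥ ((J ^ r) *ᵥ x₀)
      ≤ (1 + δ) ^ r * (x₀ ⬝ᵥ S *ᵥ x₀) := by
    intro r
    induction r with
    | zero => simp [pow_zero, Matrix.one_mulVec]
    | succ r ih =>
      have hposr : (0:ℝ) < (1 + δ) ^ r := pow_pos (by linarith) r
      have hneg : ((J ^ r) *ᵥ x₀) ⬝ᵥ S *ᵥ ((J ^ r) *ᵥ x₀) ≤ 0 :=
        le_trans ih (by nlinarith)
      have h1 : J ^ (r + 1) *ᵥ x₀ = J *ᵥ ((J ^ r) *ᵥ x₀) := by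
        rw [pow_succ', ← Matrix.mulVec_mulVec]
      rw [h1]
      calc _ ≤ (1 + δ) * (((J ^ r) *ᵥ x₀) ⬝ᵥ S *ᵥ ((J ^ r) *ᵥ x₀)) := hstep _ hneg
      _ ≤ (1 + δ) * ((1 + δ) ^ r * (x₀ ⬝ᵥ S *ᵥ x₀)) :=
          mul_le_mul_of_nonneg_left ih (by linarith)
      _ = (1 + δ) ^ (r + 1) * (x₀ ⬝ᵥ S *ᵥ x₀) := by ring
  -- growth of the iterates
  have hgrow : ∀ r : ℕ, (1 + δ) ^ r * (-(x₀ ⬝ᵥ S *ᵥ x₀))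
      ≤ (c * FS) * ∑ i, ((J ^ r *ᵥ x₀) i) ^ 2 := by
    intro r
    have h2 : -(((J ^ r) *ᵥ x₀) ⬝ᵥ S *ᵥ ((J ^ r) *ᵥ x₀))
        ≤ c * ∑ i, (S *ᵥ (J ^ r *ᵥ x₀)) i ^ 2 := hcineq _
    have h3 : ∑ i, (S *ᵥ (J ^ r *ᵥ x₀)) i ^ 2 ≤ FS * ∑ i, ((J ^ r *ᵥ x₀) i) ^ 2 := by
      calc _ ≤ (∑ i, ∑ j, S i j ^ 2) * ∑ i, ((J ^ r *ᵥ x₀) i) ^ 2 := gs_frob S _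
      _ ≤ _ := mul_le_mul_of_nonneg_right hFSsum
          (Finset.sum_nonneg fun _ _ => sq_nonneg _)
    have h4 := hiter r
    calc (1 + δ) ^ r * (-(x₀ ⬝ᵥ S *ᵥ x₀))
        = -((1 + δ) ^ r * (x₀ ⬝ᵥ S *ᵥ x₀)) := by ring
    _ ≤ -(((J ^ r) *ᵥ x₀) ⬝ᵥ S *ᵥ ((J ^ r) *ᵥ x₀)) := by linarith
    _ ≤ c * (FS * ∑ i, ((J ^ r *ᵥ x₀) i) ^ 2) :=
        le_trans h2 (mul_le_mul_of_nonneg_left h3 hc.le)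
    _ = (c * FS) * ∑ i, ((J ^ r *ᵥ x₀) i) ^ 2 := by ring
  -- pass to the complexification
  set Jc : Matrix (Fin n) (Fin n) ℂ := J.map (algebraMap ℝ ℂ) with hJc
  set T : EuclideanSpace ℂ (Fin n) →L[ℂ] EuclideanSpace ℂ (Fin n) :=
    Matrix.toEuclideanCLM (𝕜 := ℂ) Jc with hT
  have hpowmat : ∀ r : ℕ, Jc ^ r = (J ^ r).map (algebraMap ℝ ℂ) := by
    intro r
    rw [hJc]
    have := map_pow ((algebraMap ℝ ℂ).mapMatrix) J r
    simpa [RingHom.mapMatrix_apply] using this.symm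
  have hTpow : ∀ r : ℕ, T ^ r = Matrix.toEuclideanCLM (𝕜 := ℂ) (Jc ^ r) := by
    intro r
    rw [hT, map_pow]
  have hvec : ∀ (A : Matrix (Fin n) (Fin n) ℝ) (v : Fin n → ℝ),
      (Matrix.toEuclideanCLM (𝕜 := ℂ) (A.map (algebraMap ℝ ℂ)))
        ((WithLp.equiv 2 (Fin n → ℂ)).symm (fun i => (v i : ℂ)))
      = (WithLp.equiv 2 (Fin n → ℂ)).symm (fun i => ((A *ᵥ v) i : ℂ)) := by
    intro A v
    rw [WithLp.equiv_symm_apply, Matrix.toEuclideanCLM_toLp, ← Matrix.toLin'_apply]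
    congr 1
    funext i
    rw [Matrix.toLin'_apply]
    exact (RingHom.map_mulVec (algebraMap ℝ ℂ) A v i).symm
  have hnormv : ∀ v : Fin n → ℝ,
      ‖(WithLp.equiv 2 (Fin n → ℂ)).symm (fun i => (v i : ℂ))‖
        = Real.sqrt (∑ i, v i ^ 2) := by
    intro v
    rw [EuclideanSpace.norm_eq]
    congr 1
    refine Finset.sum_congr rfl fun i _ => ?_
    simp [WithLp.equiv_symm_apply, Complex.norm_real, Real.norm_eq_abs, sq_abs]
  set w₀ : EuclideanSpace ℂ (Fin n) :=
    (WithLp.equiv 2 (Fin n → ℂ)).symm (fun i => (x₀ i : ℂ)) with hw₀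
  have hTrlow : ∀ r : ℕ,
      Real.sqrt (∑ i, ((J ^ r *ᵥ x₀) i) ^ 2) ≤ ‖T ^ r‖ * ‖w₀‖ := by
    intro r
    have h1 : (T ^ r) w₀
        = (WithLp.equiv 2 (Fin n → ℂ)).symm (fun i => (((J ^ r) *ᵥ x₀) i : ℂ)) := by
      rw [hTpow r, hpowmat r, hw₀, hvec]
    calc Real.sqrt (∑ i, ((J ^ r *ᵥ x₀) i) ^ 2) = ‖(T ^ r) w₀‖ := by rw [h1, hnormv]
    _ ≤ ‖T ^ r‖ * ‖w₀‖ := (T ^ r).le_opNorm w₀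
  -- a positive lower bound growing geometrically
  set a : ℝ := (-(x₀ ⬝ᵥ S *ᵥ x₀)) / (c * FS) with ha
  have hapos : 0 < a := by
    rw [ha]
    have : 0 < -(x₀ ⬝ᵥ S *ᵥ x₀) := by linarith
    positivity
  have hNr : ∀ r : ℕ, (1 + δ) ^ r * a ≤ ∑ i, ((J ^ r *ᵥ x₀) i) ^ 2 := by
    intro r
    rw [ha, mul_div_assoc']
    rw [div_le_iff₀ (by positivity)]
    calc (1 + δ) ^ r * -(x₀ ⬝ᵥ S *ᵥ x₀) ≤ (c * FS) * ∑ i, ((J ^ r *ᵥ x₀) i) ^ 2 := hgrow r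
    _ = (∑ i, ((J ^ r *ᵥ x₀) i) ^ 2) * (c * FS) := by ring
  set θ : ℝ := Real.sqrt (1 + δ) with hθdef
  have hθpos : 0 < θ := Real.sqrt_pos.mpr (by linarith)
  have hθ1 : 1 < θ := by
    rw [hθdef]
    rw [show (1:ℝ) < Real.sqrt (1 + δ) ↔ (1:ℝ) ^ 2 < 1 + δ from Real.lt_sqrt (by norm_num)]
    nlinarith
  have hθsq : θ ^ 2 = 1 + δ := Real.sq_sqrt (by linarith)
  have hx₀ne : x₀ ≠ 0 := by
    intro h
    rw [h] at hx₀
    simp [zero_dotProduct] at hx₀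
  have hw₀pos : 0 < ‖w₀‖ := by
    rw [hw₀, hnormv]
    apply Real.sqrt_pos.mpr
    by_contra hcon
    push_neg at hcon
    have hzero : ∑ i, x₀ i ^ 2 = 0 :=
      le_antisymm hcon (Finset.sum_nonneg fun i _ => sq_nonneg _)
    apply hx₀ne
    funext i
    have := (Finset.sum_eq_zero_iff_of_nonneg
      (fun i (_ : i ∈ Finset.univ) => sq_nonneg (x₀ i))).mp hzero i (Finset.mem_univ i)
    exact pow_eq_zero_iff (by norm_num) |>.mp this
  set b : ℝ := Real.sqrt a / ‖w₀‖ with hb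
  have hbpos : 0 < b := by
    rw [hb]
    positivity
  have hfinal : ∀ r : ℕ, θ ^ r * b ≤ ‖T ^ r‖ := by
    intro r
    rw [hb, mul_div_assoc', div_le_iff₀ hw₀pos]
    calc θ ^ r * Real.sqrt a = Real.sqrt ((1 + δ) ^ r * a) := by
          rw [Real.sqrt_mul (pow_nonneg (by linarith) r) a]
          congr 1
          rw [show (1 + δ) ^ r = (θ ^ r) ^ 2 by rw [← pow_mul, mul_comm r 2, pow_mul, hθsq]]
          exact (Real.sqrt_sq (pow_nonneg hθpos.le r)).symm
    _ ≤ Real.sqrt (∑ i, ((J ^ r *ᵥ x₀) i) ^ 2) := Real.sqrt_le_sqrt (hNr r)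
    _ ≤ ‖T ^ r‖ * ‖w₀‖ := hTrlow r
  -- Gelfand's formula
  have hG := spectrum.pow_norm_pow_one_div_tendsto_nhds_spectralRadius T
  set θ' : ℝ := (1 + θ) / 2 with hθ'
  have hθ'1 : 1 < θ' := by rw [hθ']; linarith
  have hθ'θ : θ' < θ := by rw [hθ']; linarith
  have hblim : Tendsto (fun r : ℕ => θ * b ^ (1/(r:ℝ))) atTop (𝓝 θ) := by
    have h0 : Tendsto (fun r : ℕ => 1/(r:ℝ)) atTop (𝓝 0) := tendsto_one_div_atTop_nhds_zero_nat
    have h1 : ContinuousAt (fun t : ℝ => b ^ t) 0 := Real.continuousAt_const_rpow hbpos.ne'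
    have h2 : Tendsto (fun r : ℕ => b ^ (1/(r:ℝ))) atTop (𝓝 (b ^ (0:ℝ))) := h1.tendsto.comp h0
    rw [Real.rpow_zero] at h2
    have h3 := h2.const_mul θ
    rw [mul_one] at h3
    exact h3
  have hev : ∀ᶠ r : ℕ in atTop,
      ENNReal.ofReal θ' ≤ ENNReal.ofReal (‖T ^ r‖ ^ (1/(r:ℝ))) := by
    filter_upwards [hblim.eventually (eventually_gt_nhds hθ'θ), eventually_ge_atTop 1]
      with r h1 h2
    apply ENNReal.ofReal_le_ofReal
    have hrne : (r:ℝ) ≠ 0 := Nat.cast_ne_zero.mpr (by omega)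
    have hbase : θ ^ r * b ≤ ‖T ^ r‖ := hfinal r
    have hθbpos : 0 < θ ^ r * b := by positivity
    have hrw : (θ ^ r * b) ^ (1/(r:ℝ)) = θ * b ^ (1/(r:ℝ)) := by
      rw [Real.mul_rpow (by positivity) hbpos.le]
      congr 1
      rw [← Real.rpow_natCast θ r, ← Real.rpow_mul hθpos.le]
      rw [mul_one_div, div_self hrne, Real.rpow_one]
    calc θ' ≤ θ * b ^ (1/(r:ℝ)) := h1.le
    _ = (θ ^ r * b) ^ (1/(r:ℝ)) := hrw.symm
    _ ≤ ‖T ^ r‖ ^ (1/(r:ℝ)) := Real.rpow_le_rpow hθbpos.le hbase (by positivity)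
  have hsplarge : ENNReal.ofReal θ' ≤ spectralRadius ℂ T := ge_of_tendsto hG hev
  have hspectrum : spectrum ℂ T = spectrum ℂ Jc :=
    AlgEquiv.spectrum_eq (Matrix.toEuclideanCLM (𝕜 := ℂ) (n := Fin n)) Jc
  obtain ⟨μ, hμmem, hμgt⟩ : ∃ μ ∈ spectrum ℂ Jc, 1 < ‖μ‖ := by
    by_contra hcon
    push_neg at hcon
    have hsub : spectralRadius ℂ T ≤ 1 := by
      rw [spectralRadius, hspectrum]
      apply iSup₂_le
      intro μ hμ
      have hle : ‖μ‖ ≤ 1 := by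
        exact hcon μ hμ
      have : ‖μ‖₊ ≤ 1 := hle
      exact_mod_cast this
    have hcontr := le_trans hsplarge hsub
    rw [ENNReal.ofReal_le_one] at hcontr
    linarith
  rw [spectrum.mem_iff] at hμmem
  have hdet : (algebraMap ℂ (Matrix (Fin n) (Fin n) ℂ) μ - Jc).det = 0 := by
    by_contra hd
    exact hμmem ((Matrix.isUnit_iff_isUnit_det _).mpr (isUnit_iff_ne_zero.mpr hd))
  obtain ⟨w, hw0, hww⟩ := Matrix.exists_mulVec_eq_zero_iff.mpr hdet
  refine ⟨μ, w, hw0, ?_, hμgt⟩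
  have h5 : (algebraMap ℂ (Matrix (Fin n) (Fin n) ℂ) μ) *ᵥ w - Jc *ᵥ w = 0 := by
    rw [← Matrix.sub_mulVec, hww]
  have h6 : (algebraMap ℂ (Matrix (Fin n) (Fin n) ℂ) μ) *ᵥ w = μ • w := by
    funext i
    simp [Matrix.algebraMap_eq_diagonal, Matrix.mulVec_diagonal]
  rw [h6] at h5
  exact (sub_eq_zero.mp h5).symm
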